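/- Let κ be an infinite regular cardinal and let S ⊆ S^{κ⁺}_κ. Then the tree T(S) contains a cofinal branch (i.e., a chain of nodes whose domains are unbounded in κ⁺; equivalently, a strictly increasing function b : κ⁺ → S that is continuous at every point of cofinality κ and each of whose restrictions to a successor ordinal belongs to T(S)) if and only if S contains a κ-club. -/

import Mathlib

open Set Cardinal

/-- The set `S^{κ⁺}_κ` of ordinals below `κ⁺` of cofinality `κ`. -/
def SCof (κ : Cardinal.{0}) : Set Ordinal.{0} :=
  {γ | γ < (Order.succ κ).ord ∧ γ.cof = κ}

/-- `C` is a `κ`-club in `κ⁺`: it is an unbounded subset of `κ⁺` containing all of its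
limit points (below `κ⁺`) of cofinality `κ`. -/
def IsKappaClub (κ : Cardinal.{0}) (C : Set Ordinal.{0}) : Prop :=
  C ⊆ Set.Iio (Order.succ κ).ord ∧
  (∀ α < (Order.succ κ).ord, ∃ β ∈ C, α < β) ∧
  (∀ α < (Order.succ κ).ord, α.cof = κ →
    (∀ β < α, ∃ γ ∈ C, β < γ ∧ γ < α) → α ∈ C)

/-- `t` (restricted to `d`) is a node of the tree `T(S)`: `d` is a successor ordinal
below `κ⁺` and `t : d → S` is strictly increasing and continuous at all points of
cofinality `κ` in its domain. -/
def IsTSNode (κ : Cardinal.{0}) (S : Set Ordinal.{0}) (d : Ordinal.{0})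
    (t : Ordinal.{0} → Ordinal.{0}) : Prop :=
  d < (Order.succ κ).ord ∧ (∃ e, d = Order.succ e) ∧
  (∀ ξ < d, t ξ ∈ S) ∧
  (∀ ξ η, ξ < η → η < d → t ξ < t η) ∧
  (∀ ξ < d, ξ.cof = κ → t ξ = sSup (t '' Set.Iio ξ))

namespace Statement5Aux

lemma sSup_image_eq_bsup (f : Ordinal.{0} → Ordinal.{0}) (ξ : Ordinal.{0}) :
    sSup (f '' Set.Iio ξ) = Ordinal.bsup ξ (fun η _ => f η) := by
  apply le_antisymm
  · exact csSup_le' (by rintro x ⟨η, hη, rfl⟩; exact Ordinal.le_bsup _ η hη)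
  · exact Ordinal.bsup_le fun η hη => le_csSup (Ordinal.bddAbove_of_small) ⟨η, hη, rfl⟩

lemma cof_sSup_image {ξ : Ordinal.{0}} (hξ : Order.IsSuccLimit ξ) {f : Ordinal.{0} → Ordinal.{0}}
    (hf : ∀ η η', η < η' → η' < ξ → f η < f η') :
    (sSup (f '' Set.Iio ξ)).cof = ξ.cof := by
  have hmono : ∀ η η', η ≤ η' → η' < ξ → f η ≤ f η' := fun η η' h h' =>
    h.lt_or_eq.elim (fun h'' => (hf _ _ h'' h').le) (fun h'' => h'' ▸ le_rfl)
  rw [sSup_image_eq_bsup]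
  set α := Ordinal.bsup ξ (fun η _ => f η) with hα
  have hlt : ∀ η, η < ξ → f η < α := fun η hη =>
    (hf η (Order.succ η) (Order.lt_succ η) (hξ.succ_lt hη)).trans_le
      (Ordinal.le_bsup _ _ (hξ.succ_lt hη))
  apply le_antisymm
  · obtain ⟨g, hg⟩ := Ordinal.exists_fundamental_sequence ξ
    have hgξ : ∀ i hi, g i hi < ξ := fun i hi => hg.blsub_eq ▸ Ordinal.lt_blsub g i hi
    have h1 : Ordinal.bsup ξ.cof.ord (fun i hi => f (g i hi)) = α := by
      apply le_antisymm
      · exact Ordinal.bsup_le fun i hi => (hlt _ (hgξ i hi)).le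
      · refine Ordinal.bsup_le fun η hη => ?_
        have hη' : η < Ordinal.blsub ξ.cof.ord g := by rw [hg.blsub_eq]; exact hη
        obtain ⟨i, hi, hle⟩ := Ordinal.lt_blsub_iff.mp hη'
        exact (hmono _ _ hle (hgξ i hi)).trans (Ordinal.le_bsup _ i hi)
    have h2 : α.cof ≤ (ξ.cof.ord).card := by
      rw [← h1]
      exact Ordinal.cof_bsup_le (fun i hi => by rw [h1]; exact hlt _ (hgξ i hi))
    rwa [Cardinal.card_ord] at h2
  · obtain ⟨g, hg⟩ := Ordinal.exists_fundamental_sequence α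
    have hgα : ∀ i hi, g i hi < α := fun i hi => hg.blsub_eq ▸ Ordinal.lt_blsub g i hi
    have hne : ∀ i, i < α.cof.ord → {η | η < ξ ∧ ∀ hi : i < α.cof.ord, g i hi < f η}.Nonempty := by
      intro i hi
      obtain ⟨η, hη, h'⟩ := (Ordinal.lt_bsup _).mp (hgα i hi)
      exact ⟨η, hη, fun _ => h'⟩
    set H : ∀ i, i < α.cof.ord → Ordinal :=
      (fun i _ => sInf {η | η < ξ ∧ ∀ hi : i < α.cof.ord, g i hi < f η}) with hH
    have hHmem : ∀ i (hi : i < α.cof.ord), H i hi < ξ ∧ g i hi < f (H i hi) := by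
      intro i hi
      obtain ⟨h1, h2⟩ := csInf_mem (hne i hi)
      exact ⟨h1, h2 hi⟩
    have hblsub : Ordinal.blsub α.cof.ord H = ξ := by
      apply le_antisymm
      · exact Ordinal.blsub_le fun i hi => (hHmem i hi).1
      · refine le_of_forall_lt fun η hη => ?_
        have h1 : f η < Ordinal.blsub α.cof.ord g := by rw [hg.blsub_eq]; exact hlt η hη
        obtain ⟨i, hi, hle⟩ := Ordinal.lt_blsub_iff.mp h1
        have h2 : f η < f (H i hi) := hle.trans_lt (hHmem i hi).2
        have h3 : η < H i hi := by
          by_contra h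
          push_neg at h
          exact absurd (hmono _ _ h hη) (not_le.mpr h2)
        exact h3.trans (Ordinal.lt_blsub H i hi)
    calc ξ.cof = (Ordinal.blsub α.cof.ord H).cof := by rw [hblsub]
      _ ≤ (α.cof.ord).card := Ordinal.cof_blsub_le H
      _ = α.cof := Cardinal.card_ord _

noncomputable def branch (κ : Cardinal.{0}) (C : Set Ordinal.{0}) : Ordinal.{0} → Ordinal.{0} :=
  Ordinal.lt_wf.fix fun ξ ih =>
    if ξ.cof = κ then sSup (Set.range fun p : Set.Iio ξ => ih p.1 p.2)
    else sInf {c | c ∈ C ∧ sSup (Set.range fun p : Set.Iio ξ => ih p.1 p.2) < c}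

lemma branch_def (κ : Cardinal.{0}) (C : Set Ordinal.{0}) (ξ : Ordinal.{0}) :
    branch κ C ξ =
      if ξ.cof = κ then sSup (branch κ C '' Set.Iio ξ)
      else sInf {c | c ∈ C ∧ sSup (branch κ C '' Set.Iio ξ) < c} := by
  rw [branch, WellFounded.fix_eq]
  rw [Set.image_eq_range]

lemma isLimit_of_not_succ_of_ne_zero {o : Ordinal.{0}} (h : ¬∃ a, o = Order.succ a)
    (h0 : o ≠ 0) : Order.IsSuccLimit o := by
  rcases Ordinal.zero_or_succ_or_isSuccLimit o with h1 | ⟨a, rfl⟩ | h1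
  · exact absurd h1 h0
  · exact absurd ⟨a, rfl⟩ h
  · exact h1

end Statement5Aux

open Statement5Aux in
/-- `T(S)` has a cofinal branch (a strictly increasing continuous function
`b : κ⁺ → S`, all of whose restrictions to successor ordinals are nodes of `T(S)`)
if and only if `S` contains a `κ`-club. -/
theorem statement5 (κ : Cardinal.{0}) (hκ : ℵ₀ ≤ κ) (hreg : κ.IsRegular)
    (S : Set Ordinal.{0}) (hS : S ⊆ SCof κ) :
    (∃ b : Ordinal.{0} → Ordinal.{0},
      ∀ d < (Order.succ κ).ord, (∃ e, d = Order.succ e) → IsTSNode κ S d b) ↔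
    (∃ C : Set Ordinal.{0}, IsKappaClub κ C ∧ C ⊆ S) := by
  have hreg' : (Order.succ κ).IsRegular := Cardinal.isRegular_succ hκ
  have hΛcof : (Order.succ κ).ord.cof = Order.succ κ := hreg'.cof_eq
  have hΛlim : Order.IsSuccLimit ((Order.succ κ).ord) := Cardinal.isSuccLimit_ord (hκ.trans (Order.le_succ κ))
  set Λ := (Order.succ κ).ord with hΛdef
  constructor
  · rintro ⟨b, H⟩
    have hmem : ∀ ξ, ξ < Λ → b ξ ∈ S := fun ξ h =>
      (H _ (hΛlim.succ_lt h) ⟨ξ, rfl⟩).2.2.1 ξ (Order.lt_succ ξ)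
    have hmono : ∀ η ξ, η < ξ → ξ < Λ → b η < b ξ := fun η ξ h hξ =>
      (H _ (hΛlim.succ_lt hξ) ⟨ξ, rfl⟩).2.2.2.1 η ξ h (Order.lt_succ ξ)
    have hmono' : ∀ η ξ, η ≤ ξ → ξ < Λ → b η ≤ b ξ := fun η ξ h hξ =>
      h.lt_or_eq.elim (fun h' => (hmono η ξ h' hξ).le) (fun h' => h' ▸ le_rfl)
    have hcont : ∀ ξ, ξ < Λ → ξ.cof = κ → b ξ = sSup (b '' Set.Iio ξ) := fun ξ h hc =>
      (H _ (hΛlim.succ_lt h) ⟨ξ, rfl⟩).2.2.2.2 ξ (Order.lt_succ ξ) hc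
    have hid : ∀ ξ, ξ < Λ → ξ ≤ b ξ := by
      intro ξ
      induction ξ using Ordinal.induction with
      | _ ξ IH =>
        intro hξ
        refine le_of_forall_lt fun η hη => ?_
        exact (IH η hη (hη.trans hξ)).trans_lt (hmono η ξ hη hξ)
    refine ⟨b '' Set.Iio Λ, ⟨?_, ?_, ?_⟩, ?_⟩
    · rintro x ⟨ξ, hξ, rfl⟩
      exact (hS (hmem ξ hξ)).1
    · intro α hα
      exact ⟨b (Order.succ α), ⟨Order.succ α, hΛlim.succ_lt hα, rfl⟩,
        (hid α hα).trans_lt (hmono α (Order.succ α) (Order.lt_succ α) (hΛlim.succ_lt hα))⟩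
    · intro α hαΛ hcof hub
      have hαlim : Order.IsSuccLimit α := Ordinal.aleph0_le_cof.mp (by rw [hcof]; exact hκ)
      have hTne : {ξ | ξ < Λ ∧ α ≤ b ξ}.Nonempty := ⟨α, hαΛ, hid α hαΛ⟩
      set ξ₀ := sInf {ξ | ξ < Λ ∧ α ≤ b ξ} with hξ₀def
      obtain ⟨hξ₀Λ, hαb⟩ := csInf_mem hTne
      have hmin : ∀ η, η < ξ₀ → b η < α := by
        intro η hη
        by_contra h
        push_neg at h
        have h1 : ξ₀ ≤ η := csInf_le' (⟨hη.trans hξ₀Λ, h⟩ : η ∈ {ξ | ξ < Λ ∧ α ≤ b ξ})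
        exact absurd h1 (not_le.mpr hη)
      have hCtoIio : ∀ γ, γ ∈ b '' Set.Iio Λ → γ < α → ∃ η, η < ξ₀ ∧ b η = γ := by
        rintro γ ⟨η, hη, rfl⟩ hγα
        refine ⟨η, ?_, rfl⟩
        by_contra h
        push_neg at h
        exact absurd (hαb.trans (hmono' ξ₀ η h hη)) (not_le.mpr hγα)
      have hξ₀lim : Order.IsSuccLimit ξ₀ := by
        refine Statement5Aux.isLimit_of_not_succ_of_ne_zero ?_ ?_
        · rintro ⟨η, hηe⟩
          have hηξ₀ : η < ξ₀ := hηe ▸ Order.lt_succ η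
          obtain ⟨γ, hγC, hbηγ, hγα⟩ := hub (b η) (hmin η hηξ₀)
          obtain ⟨η', hη', rfl⟩ := hCtoIio γ hγC hγα
          have hle : η' ≤ η := by rw [hηe] at hη'; exact Order.lt_succ_iff.mp hη'
          exact absurd (hmono' η' η hle (hηξ₀.trans hξ₀Λ)) (not_le.mpr hbηγ)
        · intro h0
          obtain ⟨γ, hγC, h0γ, hγα⟩ := hub 0 hαlim.pos
          obtain ⟨η', hη', rfl⟩ := hCtoIio γ hγC hγα
          rw [h0] at hη'
          exact absurd hη' (not_lt_of_ge (zero_le (a := η')))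
      have hsupα : sSup (b '' Set.Iio ξ₀) = α := by
        apply le_antisymm
        · exact csSup_le' (by rintro x ⟨η, hη, rfl⟩; exact (hmin η hη).le)
        · refine le_of_forall_lt fun β hβ => ?_
          obtain ⟨γ, hγC, hβγ, hγα⟩ := hub β hβ
          obtain ⟨η, hη, rfl⟩ := hCtoIio γ hγC hγα
          exact hβγ.trans_le (le_csSup (Ordinal.bddAbove_of_small) ⟨η, hη, rfl⟩)
      have hcofξ₀ : ξ₀.cof = κ := by
        have h := cof_sSup_image hξ₀lim (fun η η' h h' => hmono η η' h (h'.trans hξ₀Λ))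
        rw [hsupα, hcof] at h
        exact h.symm
      exact ⟨ξ₀, hξ₀Λ, by rw [hcont ξ₀ hξ₀Λ hcofξ₀, hsupα]⟩
    · rintro x ⟨ξ, hξ, rfl⟩
      exact hmem ξ hξ
  · rintro ⟨C, ⟨hCsub, hCub, hCcl⟩, hCS⟩
    have inv : ∀ ξ, ξ < Λ → branch κ C ξ ∈ C ∧ ∀ η, η < ξ → branch κ C η < branch κ C ξ := by
      intro ξ
      induction ξ using Ordinal.induction with
      | _ ξ IH =>
        intro hξΛ
        have hsublt : ∀ η, η < ξ → branch κ C η < Λ := fun η hη =>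
          hCsub (IH η hη (hη.trans hξΛ)).1
        have hsΛ : sSup (branch κ C '' Set.Iio ξ) < Λ := by
          rw [sSup_image_eq_bsup]
          refine Ordinal.bsup_lt_ord ?_ (fun η hη => hsublt η hη)
          rw [hΛcof]
          exact Cardinal.lt_ord.mp hξΛ
        obtain ⟨c₀, hc₀C, hsc₀⟩ := hCub _ hsΛ
        have hNe : {c | c ∈ C ∧ sSup (branch κ C '' Set.Iio ξ) < c}.Nonempty :=
          ⟨c₀, hc₀C, hsc₀⟩
        have hle : ∀ η, η < ξ → branch κ C η ≤ sSup (branch κ C '' Set.Iio ξ) := fun η hη =>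
          le_csSup (Ordinal.bddAbove_of_small) ⟨η, hη, rfl⟩
        by_cases hc : ξ.cof = κ
        · have hbξ : branch κ C ξ = sSup (branch κ C '' Set.Iio ξ) := by
            rw [branch_def, if_pos hc]
          have hξlim : Order.IsSuccLimit ξ := Ordinal.aleph0_le_cof.mp (by rw [hc]; exact hκ)
          have hlt : ∀ η, η < ξ → branch κ C η < branch κ C ξ := by
            intro η hη
            rw [hbξ]
            have hsη : Order.succ η < ξ := hξlim.succ_lt hη
            exact lt_of_lt_of_le ((IH _ hsη (hsη.trans hξΛ)).2 η (Order.lt_succ η)) (hle _ hsη)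
          refine ⟨?_, hlt⟩
          rw [hbξ]
          refine hCcl _ hsΛ ?_ ?_
          · rw [cof_sSup_image hξlim (fun η η' h h' => (IH η' h' (h'.trans hξΛ)).2 η h)]
            exact hc
          · intro β hβ
            have hx : ∃ x ∈ branch κ C '' Set.Iio ξ, β < x := by
              by_contra h
              push_neg at h
              exact absurd hβ (not_lt.mpr (csSup_le' (fun x hx => h x hx)))
            obtain ⟨x, ⟨η, hη, rfl⟩, hβx⟩ := hx
            refine ⟨branch κ C η, (IH η hη (hη.trans hξΛ)).1, hβx, ?_⟩
            have := hlt η hη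
            rwa [hbξ] at this
        · have hbξ : branch κ C ξ = sInf {c | c ∈ C ∧ sSup (branch κ C '' Set.Iio ξ) < c} := by
            rw [branch_def, if_neg hc]
          have hmem := csInf_mem hNe
          rw [← hbξ] at hmem
          exact ⟨hmem.1, fun η hη => (hle η hη).trans_lt hmem.2⟩
    refine ⟨branch κ C, ?_⟩
    rintro d hd ⟨e, rfl⟩
    refine ⟨hd, ⟨e, rfl⟩, ?_, ?_, ?_⟩
    · intro ξ hξ
      exact hCS (inv ξ (hξ.trans hd)).1
    · intro ξ η hξη hηd
      exact (inv η (hηd.trans hd)).2 ξ hξη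
    · intro ξ _ hc
      rw [branch_def, if_pos hc]
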